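/- arXiv:2102.02190 — 6 statements merged into one kernel-verified Lean document; each statement's English description precedes it below -/
import Mathlib

section
/- Let G be a finite transitive permutation group on a finite set Ω, let α ∈ Ω, let b ≥ 1 be an integer, and let R be a set of representatives for the G-conjugacy classes of elements of prime order in G_α. Then the proportion Q(G,b) of b-tuples in Ω^b that are not bases for G satisfies Q(G,b) ≤ Σ_{x∈R} |x^G ∩ G_α|^b · |C_G(x)|^{b-1} / |G|^{b-1}. -/
set_option maxRecDepth 4000

open Finset MulAction

lemma aux_swap {A B : Type*} [Fintype B] (s : Finset A) (q : A → B → Prop)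
    [∀ a b, Decidable (q a b)] :
    ∑ a ∈ s, (Finset.univ.filter (fun b => q a b)).card
      = ∑ b : B, (s.filter (fun a => q a b)).card := by
  simp only [Finset.card_filter]
  exact Finset.sum_comm

lemma aux_calc (c f nq a zc gq : ℚ) (m : ℕ) (hn : 0 < nq) (hg : 0 < gq)
    (h1 : c * f = nq * a) (h2 : c * zc = gq) :
    c * f ^ (m + 1) / nq ^ (m + 1) = a ^ (m + 1) * zc ^ m / gq ^ m := by
  rw [div_eq_div_iff (by positivity) (by positivity)]
  calc c * f ^ (m + 1) * gq ^ m = (c * f) ^ (m + 1) * zc ^ m := by rw [← h2]; ring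
    _ = (nq * a) ^ (m + 1) * zc ^ m := by rw [h1]
    _ = a ^ (m + 1) * zc ^ m * nq ^ (m + 1) := by ring

/-- Liebeck–Shalev bound: for a finite transitive permutation group `G` on `Ω`,
a point `α`, an integer `b ≥ 1` and a set `R` of representatives of the
`G`-conjugacy classes of prime order elements of `G_α`, the proportion `Q(G,b)`
of `b`-tuples that are not bases for `G` satisfies
`Q(G,b) ≤ Σ_{x∈R} |x^G ∩ G_α|^b · |C_G(x)|^{b-1} / |G|^{b-1}`. -/
theorem stmt4 {G Ω : Type*} [Group G] [Finite G] [Fintype Ω] [MulAction G Ω]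
    [FaithfulSMul G Ω] [MulAction.IsPretransitive G Ω] (α : Ω) (b : ℕ) (hb : 1 ≤ b)
    (R : Finset G)
    (hR : ∀ x ∈ R, (orderOf x).Prime ∧ x • α = α)
    (hrep : ∀ y : G, (orderOf y).Prime → y • α = α → ∃! x, x ∈ R ∧ IsConj x y) :
    (Nat.card {t : Fin b → Ω | ∃ g : G, g ≠ 1 ∧ ∀ i, g • t i = t i} : ℚ)
        / (Fintype.card Ω : ℚ) ^ b
      ≤ ∑ x ∈ R,
          (Nat.card {y : G | IsConj x y ∧ y • α = α} : ℚ) ^ b *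
            (Nat.card (Subgroup.centralizer ({x} : Set G)) : ℚ) ^ (b - 1) /
            (Nat.card G : ℚ) ^ (b - 1) := by
  classical
  cases nonempty_fintype G
  -- notation
  set Fx : G → Finset Ω := fun y => Finset.univ.filter (fun ω => y • ω = ω) with hFx
  set Cx : G → Finset G := fun x => Finset.univ.filter (fun y => IsConj x y) with hCx
  -- conjugation invariance of fixed point count
  have fix_conj : ∀ (h y : G), (Fx (h * y * h⁻¹)).card = (Fx y).card := by
    intro h y
    have himg : Fx (h * y * h⁻¹) = (Fx y).image (fun ω => h • ω) := by
      ext ω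
      simp only [hFx, Finset.mem_filter, Finset.mem_univ, true_and, Finset.mem_image]
      constructor
      · intro hω
        refine ⟨h⁻¹ • ω, ?_, by simp⟩
        rw [mul_smul, mul_smul] at hω
        calc y • h⁻¹ • ω = h⁻¹ • (h • y • h⁻¹ • ω) := by rw [inv_smul_smul]
          _ = h⁻¹ • ω := by rw [hω]
      · rintro ⟨ω', hω', rfl⟩
        rw [mul_smul, mul_smul, inv_smul_smul, hω']
    rw [himg, Finset.card_image_of_injective _ (MulAction.injective h)]
  have fix_Cx : ∀ x : G, ∀ y ∈ Cx x, (Fx y).card = (Fx x).card := by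
    intro x y hy
    rw [hCx] at hy
    obtain ⟨c, rfl⟩ := isConj_iff.mp (Finset.mem_filter.mp hy).2
    exact fix_conj c x
  -- fiber count is independent of the point
  have fiber : ∀ (x : G) (ω : Ω),
      ((Cx x).filter (fun y => y • ω = ω)).card = ((Cx x).filter (fun y => y • α = α)).card := by
    intro x ω
    obtain ⟨h, hh⟩ := MulAction.exists_smul_eq G α ω
    have himg : (Cx x).filter (fun y => y • ω = ω)
        = (((Cx x).filter (fun y => y • α = α)).image (fun y => h * y * h⁻¹)) := by
      ext y
      simp only [hCx, Finset.mem_filter, Finset.mem_univ, true_and, Finset.mem_image]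
      constructor
      · rintro ⟨hcj, hfix⟩
        refine ⟨h⁻¹ * y * h, ⟨⟨hcj.trans (isConj_iff.mpr ⟨h⁻¹, by rw [inv_inv]⟩), ?_⟩, by group⟩⟩
        rw [mul_smul, mul_smul, hh, hfix, ← hh, inv_smul_smul]
      · rintro ⟨y', ⟨⟨hcj, hfix⟩, rfl⟩⟩
        refine ⟨hcj.trans (isConj_iff.mpr ⟨h, rfl⟩), ?_⟩
        rw [mul_smul, mul_smul, ← hh, inv_smul_smul, hfix]
    rw [himg, Finset.card_image_of_injective]
    intro u v huv
    simpa using mul_left_cancel (mul_right_cancel huv)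
  -- double counting
  have double : ∀ x : G, (Cx x).card * (Fx x).card
      = Fintype.card Ω * ((Cx x).filter (fun y => y • α = α)).card := by
    intro x
    calc (Cx x).card * (Fx x).card = ∑ y ∈ Cx x, (Fx y).card := by
          rw [Finset.sum_congr rfl (fix_Cx x), Finset.sum_const, smul_eq_mul]
      _ = ∑ ω : Ω, ((Cx x).filter (fun y => y • ω = ω)).card :=
          aux_swap (Cx x) (fun y ω => y • ω = ω)
      _ = ∑ ω : Ω, ((Cx x).filter (fun y => y • α = α)).card :=
          Finset.sum_congr rfl fun ω _ => fiber x ω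
      _ = _ := by rw [Finset.sum_const, Finset.card_univ, smul_eq_mul]
  -- class equation
  have classeq : ∀ x : G, (Cx x).card * Nat.card (Subgroup.centralizer ({x} : Set G))
      = Nat.card G := by
    intro x
    have horb : (MulAction.orbit (ConjAct G) x).toFinset = Cx x := by
      ext y
      simp only [Set.mem_toFinset, ConjAct.mem_orbit_conjAct, hCx, Finset.mem_filter,
        Finset.mem_univ, true_and]
      exact isConj_comm
    calc (Cx x).card * Nat.card (Subgroup.centralizer ({x} : Set G))
        = Fintype.card (MulAction.orbit (ConjAct G) x)
            * Fintype.card (MulAction.stabilizer (ConjAct G) x) := by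
          rw [← horb, Set.toFinset_card,
            Subgroup.nat_card_centralizer_nat_card_stabilizer, Nat.card_eq_fintype_card]
      _ = Fintype.card (ConjAct G) :=
          MulAction.card_orbit_mul_card_stabilizer_eq_card_group _ _
      _ = Nat.card G := by
          rw [Nat.card_eq_fintype_card]
          exact Fintype.card_congr ConjAct.ofConjAct.toEquiv
  -- the non-base set
  set N : Finset (Fin b → Ω) :=
    Finset.univ.filter (fun t => ∃ g : G, g ≠ 1 ∧ ∀ i, g • t i = t i) with hN
  -- inclusion into union over R of conjugates' fixed tuples
  have hsub : N ⊆ R.biUnion (fun x => (Cx x).biUnion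
      (fun y => Fintype.piFinset (fun _ : Fin b => Fx y))) := by
    intro t ht
    obtain ⟨g, hg1, hgfix⟩ := (Finset.mem_filter.mp ht).2
    -- a prime order power of g
    have hog : orderOf g ≠ 1 := by simpa [orderOf_eq_one_iff] using hg1
    obtain ⟨p, hp, hdvd⟩ := (orderOf g).exists_prime_and_dvd hog
    set y : G := g ^ (orderOf g / p) with hy
    have hyp : (orderOf y).Prime := by
      rw [hy, orderOf_pow,
        Nat.gcd_eq_right (Nat.div_dvd_of_dvd hdvd),
        Nat.div_div_self hdvd (orderOf_pos g).ne']
      exact hp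
    have hyfix : ∀ i, y • t i = t i := by
      intro i
      rw [hy]
      generalize (orderOf g / p) = k
      induction k with
      | zero => simp
      | succ k ih => rw [pow_succ, mul_smul, hgfix i, ih]
    obtain ⟨h, hh⟩ := MulAction.exists_smul_eq G (t ⟨0, hb⟩) α
    set z : G := h * y * h⁻¹ with hz
    have hsc : SemiconjBy h y z := by
      rw [SemiconjBy, hz]; group
    have hzfix : z • α = α := by
      rw [hz, mul_smul, mul_smul, ← hh, inv_smul_smul, hyfix, hh]
    obtain ⟨x, ⟨hxR, hxz⟩, _⟩ := hrep z (hsc.orderOf_eq ▸ hyp) hzfix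
    have hxy : IsConj x y := hxz.trans (isConj_iff.mpr ⟨h, rfl⟩).symm
    refine Finset.mem_biUnion.mpr ⟨x, hxR, Finset.mem_biUnion.mpr
      ⟨y, ?_, Fintype.mem_piFinset.mpr fun i => ?_⟩⟩
    · simp only [hCx, Finset.mem_filter, Finset.mem_univ, true_and]
      exact hxy
    · simp only [hFx, Finset.mem_filter, Finset.mem_univ, true_and]
      exact hyfix i
  -- cardinal bound
  have hcard : (N.card : ℚ) ≤ ∑ x ∈ R, ((Cx x).card : ℚ) * ((Fx x).card : ℚ) ^ b := by
    have h1 : N.card ≤ ∑ x ∈ R, ∑ y ∈ Cx x, (Fx y).card ^ b := by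
      refine (Finset.card_le_card hsub).trans ?_
      refine (Finset.card_biUnion_le).trans (Finset.sum_le_sum fun x _ => ?_)
      refine (Finset.card_biUnion_le).trans (Finset.sum_le_sum fun y _ => ?_)
      rw [Fintype.card_piFinset]
      simp
    have h2 : ∑ x ∈ R, ∑ y ∈ Cx x, (Fx y).card ^ b
        = ∑ x ∈ R, (Cx x).card * (Fx x).card ^ b := by
      refine Finset.sum_congr rfl fun x _ => ?_
      rw [Finset.sum_congr rfl (fun y hy => by rw [fix_Cx x y hy]),
        Finset.sum_const, smul_eq_mul]
    calc (N.card : ℚ) ≤ ((∑ x ∈ R, ∑ y ∈ Cx x, (Fx y).card ^ b : ℕ) : ℚ) := by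
          exact_mod_cast h1
      _ = _ := by rw [h2]; push_cast; ring
  -- identify Nat.cards with Finset cards
  have hNQ : (Nat.card {t : Fin b → Ω | ∃ g : G, g ≠ 1 ∧ ∀ i, g • t i = t i}) = N.card := by
    rw [Nat.card_eq_fintype_card, hN]
    convert Fintype.card_subtype _
    case e'_3 => exact Iff.rfl
    case convert_5 => infer_instance
  have haQ : ∀ x : G, (Nat.card {y : G | IsConj x y ∧ y • α = α})
      = ((Cx x).filter (fun y => y • α = α)).card := by
    intro x
    rw [hCx, Finset.filter_filter, Nat.card_eq_fintype_card]
    convert Fintype.card_subtype _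
    case e'_3 => exact Iff.rfl
    case convert_5 => infer_instance
  -- final computation
  rw [hNQ]
  rcases isEmpty_or_nonempty Ω with hΩ | hΩ
  · haveI : IsEmpty (Fin b → Ω) := ⟨fun t => hΩ.false (t ⟨0, hb⟩)⟩
    have : N = ∅ := Finset.eq_empty_of_isEmpty N
    rw [this]
    simp only [Finset.card_empty, Nat.cast_zero, zero_div]
    refine Finset.sum_nonneg fun x _ => by positivity
  · have hn : (0:ℚ) < Fintype.card Ω := by exact_mod_cast Fintype.card_pos
    have hg : (0:ℚ) < Nat.card G := by exact_mod_cast Nat.card_pos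
    calc (N.card : ℚ) / (Fintype.card Ω : ℚ) ^ b
        ≤ (∑ x ∈ R, ((Cx x).card : ℚ) * ((Fx x).card : ℚ) ^ b) / (Fintype.card Ω : ℚ) ^ b := by
          gcongr
      _ = ∑ x ∈ R, ((Cx x).card : ℚ) * ((Fx x).card : ℚ) ^ b / (Fintype.card Ω : ℚ) ^ b :=
          Finset.sum_div _ _ _
      _ ≤ _ := by
          refine Finset.sum_le_sum fun x _ => le_of_eq ?_
          rw [haQ x]
          obtain ⟨m, rfl⟩ : ∃ m, b = m + 1 := ⟨b - 1, (Nat.succ_pred_eq_of_pos hb).symm⟩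
          simp only [Nat.add_sub_cancel]
          exact aux_calc _ _ _ _ _ _ m hn hg (by exact_mod_cast double x)
            (by exact_mod_cast classeq x)
end

section
/- Let H be a finite permutation group on a set Δ with |Δ| ≥ 2 and let K ≤ S_r be nontrivial. Let G be a subgroup of the wreath product H ≀ K acting via the product action on Ω = Δ^r. Then b_Ω(G) ≤ ⌈ log d(K) / log |Δ| ⌉ + b_Δ(H), where d(K) is the distinguishing number of K on {1,…,r} and b denotes base size. -/
lemma aux_pow (d c : ℕ) (hc : 2 ≤ c) :
    d ≤ c ^ ⌈Real.log d / Real.log c⌉₊ := by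
  rcases Nat.eq_zero_or_pos d with h | hd
  · simp [h]
  · have hc1 : (1:ℝ) < c := by exact_mod_cast hc
    have hlogc : 0 < Real.log c := Real.log_pos hc1
    set m := ⌈Real.log d / Real.log c⌉₊
    have h1 : Real.log d ≤ m * Real.log c := by
      rw [← div_le_iff₀ hlogc]
      exact Nat.le_ceil _
    have h2 : (d:ℝ) ≤ (c:ℝ) ^ m := by
      rw [← Real.log_le_log_iff (by exact_mod_cast hd) (by positivity), Real.log_pow]
      exact h1
    exact_mod_cast h2

/-- Let `H ≤ Sym(Δ)` with `|Δ| ≥ 2`, let `K ≤ S_r` be nontrivial, and let `G` be a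
subgroup of the wreath product `H ≀ K` in its product action on `Ω = Δ^r` (i.e. every
element of `G` has the product-action form with components in `H` and top part in `K`).
Then `b_Ω(G) ≤ ⌈ log d(K) / log |Δ| ⌉ + b_Δ(H)`, where `d(K)` is the distinguishing
number of `K` on `{1,…,r}`. -/
theorem stmt5 {Δ : Type*} [Fintype Δ] (hΔ : 2 ≤ Fintype.card Δ)
    (H : Subgroup (Equiv.Perm Δ)) {r : ℕ}
    (K : Subgroup (Equiv.Perm (Fin r))) (hK : K ≠ ⊥)
    (G : Subgroup (Equiv.Perm (Fin r → Δ)))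
    (hG : ∀ g ∈ G, ∃ π ∈ K, ∃ h : Fin r → Equiv.Perm Δ,
        (∀ i, h i ∈ H) ∧ ∀ (f : Fin r → Δ) (i : Fin r), g f (π i) = h i (f i)) :
    sInf {n | ∃ S : Finset (Fin r → Δ), S.card = n ∧
        ∀ g ∈ G, (∀ f ∈ S, g f = f) → g = 1}
      ≤ ⌈Real.log (sInf {d | ∃ c : Fin r → Fin d,
            ∀ π ∈ K, (∀ i, c (π i) = c i) → π = 1} : ℕ) /
          Real.log (Fintype.card Δ)⌉₊
        + sInf {n | ∃ S : Finset Δ, S.card = n ∧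
            ∀ h ∈ H, (∀ δ ∈ S, h δ = δ) → h = 1} := by
  classical
  -- the distinguishing-number set is nonempty (take the identity coloring)
  have hDne : {d | ∃ c : Fin r → Fin d,
      ∀ π ∈ K, (∀ i, c (π i) = c i) → π = 1}.Nonempty := by
    refine ⟨r, id, fun π _ hfix => ?_⟩
    exact Equiv.ext fun i => hfix i
  set d := sInf {d | ∃ c : Fin r → Fin d,
      ∀ π ∈ K, (∀ i, c (π i) = c i) → π = 1} with hd
  obtain ⟨col, hcol⟩ := Nat.sInf_mem hDne
  -- the base set for H is nonempty (take all of Δ)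
  have hBne : {n | ∃ S : Finset Δ, S.card = n ∧
      ∀ h ∈ H, (∀ δ ∈ S, h δ = δ) → h = 1}.Nonempty := by
    refine ⟨Fintype.card Δ, Finset.univ, by simp, fun h _ hfix => ?_⟩
    exact Equiv.ext fun δ => hfix δ (Finset.mem_univ δ)
  obtain ⟨T, hTcard, hT⟩ := Nat.sInf_mem hBne
  set m := ⌈Real.log d / Real.log (Fintype.card Δ)⌉₊ with hm
  -- embed Fin d into Fin m → Δ
  have hcard : Fintype.card (Fin d) ≤ Fintype.card (Fin m → Δ) := by
    rw [Fintype.card_fin, Fintype.card_fun, Fintype.card_fin]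
    exact aux_pow d (Fintype.card Δ) hΔ
  obtain ⟨emb⟩ := Function.Embedding.nonempty_of_card_le hcard
  -- the base for G
  set F : Fin m → (Fin r → Δ) := fun j i => emb (col i) j with hF
  set S : Finset (Fin r → Δ) :=
    Finset.image F Finset.univ ∪ T.image (fun δ => (fun _ : Fin r => δ)) with hS
  refine le_trans (Nat.sInf_le ⟨S, rfl, ?_⟩) ?_
  · intro g hg hfix
    obtain ⟨π, hπ, h, hh, hgh⟩ := hG g hg
    -- all h i are trivial
    have hh1 : ∀ i, h i = 1 := by
      intro i
      refine hT (h i) (hh i) fun δ hδ => ?_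
      have hmem : (fun _ : Fin r => δ) ∈ S :=
        Finset.mem_union_right _ (Finset.mem_image.2 ⟨δ, hδ, rfl⟩)
      have := hgh (fun _ => δ) i
      rw [hfix _ hmem] at this
      exact this.symm
    -- π is trivial
    have hπ1 : π = 1 := by
      refine hcol π hπ fun i => ?_
      refine emb.injective (funext fun j => ?_)
      have hmem : F j ∈ S :=
        Finset.mem_union_left _ (Finset.mem_image.2 ⟨j, Finset.mem_univ j, rfl⟩)
      have := hgh (F j) i
      rw [hfix _ hmem, hh1 i] at this
      simpa [hF] using this
    -- hence g is trivial
    refine Equiv.ext fun f => funext fun i => ?_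
    have := hgh f i
    rw [hπ1, hh1 i] at this
    simpa using this
  · calc S.card ≤ (Finset.image F Finset.univ).card
          + (T.image (fun δ => (fun _ : Fin r => δ))).card := Finset.card_union_le _ _
      _ ≤ m + sInf {n | ∃ S : Finset Δ, S.card = n ∧
            ∀ h ∈ H, (∀ δ ∈ S, h δ = δ) → h = 1} := by
          gcongr
          · exact le_trans Finset.card_image_le (by simp)
          · rw [← hTcard]; exact Finset.card_image_le
end

section
/- Under the twisted wreath product hypothesis, for every x ∈ P the number of elements of the base group B fixed by x satisfies |Fix_B(x)| ≤ |T|^{ω(x)}, where ω(x) is the number of orbits of ⟨x⟩ on {1,…,k}. -/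
/-- Under the twisted wreath hypothesis, the number of elements of the base group `B`
fixed by `x ∈ P` is at most `|T|^{ω(x)}`, where `ω(x)` is the number of orbits of
`⟨x⟩` on `{1,…,k}`. -/
theorem stmt10 {P T : Type*} [Group P] [Group T] [Finite P] [Finite T] {k : ℕ}
    [MulAction P (Fin k)] [MulAction.IsPretransitive P (Fin k)] (i₀ : Fin k)
    (φ : MulAction.stabilizer P i₀ →* MulAut T) (x : P) :
    Nat.card {f : P → T //
        (∀ (y : P) (q : MulAction.stabilizer P i₀), f (y * q) = φ q (f y)) ∧
        ∀ y : P, f (x * y) = f y}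
      ≤ Nat.card T ^
          Nat.card (MulAction.orbitRel.Quotient (Subgroup.zpowers x) (Fin k)) := by
  classical
  set B := {f : P → T //
        (∀ (y : P) (q : MulAction.stabilizer P i₀), f (y * q) = φ q (f y)) ∧
        ∀ y : P, f (x * y) = f y} with hB
  set Ω := MulAction.orbitRel.Quotient (Subgroup.zpowers x) (Fin k) with hΩ
  -- transversal
  have htrans : ∀ i : Fin k, ∃ a : P, a • i₀ = i := fun i =>
    MulAction.exists_smul_eq P i₀ i
  choose a ha using htrans
  -- x^n invariance
  have hz : ∀ (f : B) (n : ℤ) (y : P), f.1 (x ^ n * y) = f.1 y := by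
    intro f n
    induction n using Int.induction_on with
    | zero => intro y; simp
    | succ n ih =>
      intro y
      have : x ^ ((n : ℤ) + 1) * y = x ^ (n : ℤ) * (x * y) := by
        rw [zpow_add_one]; group
      rw [this, ih, f.2.2]
    | pred n ih =>
      intro y
      have h1 : f.1 (x⁻¹ * y) = f.1 y := by
        have := f.2.2 (x⁻¹ * y)
        simpa using this.symm
      have : x ^ (-(n : ℤ) - 1) * y = x ^ (-(n : ℤ)) * (x⁻¹ * y) := by
        rw [zpow_sub_one]; group
      rw [this, ih, h1]
  -- key: f is determined by values on the transversal of orbit representatives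
  have key : ∀ (y : P), ∃ (O : Ω) (q : MulAction.stabilizer P i₀),
      ∀ (f : B), f.1 y = φ q (f.1 (a O.out)) := by
    intro y
    set i : Fin k := y • i₀ with hi
    set O : Ω := Quotient.mk _ i with hO
    set j : Fin k := O.out with hj
    have hrel : j ∈ MulAction.orbit (Subgroup.zpowers x) i := by
      have := Quotient.mk_out (s := MulAction.orbitRel (Subgroup.zpowers x) (Fin k)) i
      exact Quotient.exact (Quotient.out_eq O)
    obtain ⟨g, hg⟩ := hrel
    obtain ⟨n, hn⟩ := g.2
    have hn' : x ^ n = (g : P) := hn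
    have hg' : (g : P) • i = j := hg
    have hgi : x ^ n • i = j := by rw [hn']; exact hg'
    have hq : ((a j)⁻¹ * (x ^ n * y)) • i₀ = i₀ := by
      have : (x ^ n * y) • i₀ = j := by rw [mul_smul, ← hi, hgi]
      rw [mul_smul, this, inv_smul_eq_iff, ha]
    refine ⟨O, ⟨(a j)⁻¹ * (x ^ n * y), hq⟩, fun f => ?_⟩
    have hy : y = x ^ (-n) * (a j * ((a j)⁻¹ * (x ^ n * y))) := by group
    calc f.1 y = f.1 (x ^ (-n) * (a j * ((a j)⁻¹ * (x ^ n * y)))) := by rw [← hy]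
      _ = f.1 (a j * ((a j)⁻¹ * (x ^ n * y))) := hz f _ _
      _ = φ ⟨(a j)⁻¹ * (x ^ n * y), hq⟩ (f.1 (a j)) := f.2.1 (a j) ⟨_, hq⟩
  -- injective map into Ω → T
  have hinj : Function.Injective (fun (f : B) (O : Ω) => f.1 (a O.out)) := by
    intro f g hfg
    have hfg' : ∀ O : Ω, f.1 (a O.out) = g.1 (a O.out) := fun O => congrFun hfg O
    apply Subtype.ext
    funext y
    obtain ⟨O, q, hf⟩ := key y
    rw [hf f, hf g, hfg' O]
  have := Nat.card_le_card_of_injective _ hinj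
  calc Nat.card B ≤ Nat.card (Ω → T) := this
    _ = Nat.card T ^ Nat.card Ω := Nat.card_fun
end

section
/- Under the twisted wreath hypothesis, log d(P) / log |T| < log |G| / log |B|, where d(P) is the distinguishing number of P on {1,…,k}, |G| = |T|^k |P| and |B| = |T|^k, assuming the bound d(P) ≤ 48·|P^{{1,…,k}}|^{1/k} (Duyan–Halasi–Maróti) and |T| > 48 (true for any nonabelian simple group, since the smallest has order 60). -/
/-- Under the twisted wreath hypothesis, assuming the Duyan–Halasi–Maróti bound
`d(P) ≤ 48·|P^{𝐤}|^{1/k}` and `|T| > 48`, we have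
`log d(P) / log |T| < log |G| / log |B|`, where `|G| = |T|^k·|P|` and `|B| = |T|^k`. -/
theorem stmt14 {P T : Type*} [Group P] [Group T] [Finite P] [Finite T] {k : ℕ}
    (hk : 2 ≤ k) [MulAction P (Fin k)] [MulAction.IsPretransitive P (Fin k)]
    (hT48 : 48 < Nat.card T)
    (d : ℕ)
    (hd : d = sInf {d' | ∃ c : Fin k → Fin d',
        ∀ x : P, (∀ i : Fin k, c (x • i) = c i) → ∀ i : Fin k, x • i = i})
    (hDHM : (d : ℝ) ≤ 48 *
        (Nat.card (MulAction.toPermHom P (Fin k)).range : ℝ) ^ ((1 : ℝ) / k)) :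
    Real.log d / Real.log (Nat.card T)
      < Real.log ((Nat.card T : ℝ) ^ k * (Nat.card P : ℝ)) /
          Real.log ((Nat.card T : ℝ) ^ k) := by
  set R : ℕ := Nat.card (MulAction.toPermHom P (Fin k)).range with hR
  have ht : (48 : ℝ) < (Nat.card T : ℝ) := by exact_mod_cast hT48
  have hlt : 0 < Real.log (Nat.card T) := Real.log_pos (by linarith)
  have hl48 : Real.log 48 < Real.log (Nat.card T) := Real.log_lt_log (by norm_num) ht
  have hl48pos : (0 : ℝ) < Real.log 48 := Real.log_pos (by norm_num)
  have hP0 : 0 < Nat.card P := Nat.card_pos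
  have hR0 : 0 < R := Nat.card_pos
  have hRP : R ≤ Nat.card P :=
    Nat.card_le_card_of_surjective _ (MulAction.toPermHom P (Fin k)).rangeRestrict_surjective
  have hlR : Real.log R ≤ Real.log (Nat.card P) := by
    apply Real.log_le_log (by exact_mod_cast hR0)
    exact_mod_cast hRP
  have hlR0 : (0 : ℝ) ≤ Real.log R := Real.log_natCast_nonneg R
  have hlP0 : (0 : ℝ) ≤ Real.log (Nat.card P) := Real.log_natCast_nonneg _
  have hk0 : (0 : ℝ) < (k : ℝ) := by positivity
  have hld : Real.log d ≤ Real.log 48 + (1 / (k : ℝ)) * Real.log R := by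
    rcases Nat.eq_zero_or_pos d with h0 | hpos
    · simp only [h0, Nat.cast_zero, Real.log_zero]
      positivity
    · have h1 : Real.log d ≤ Real.log (48 * (R : ℝ) ^ ((1 : ℝ) / k)) :=
        Real.log_le_log (by exact_mod_cast hpos) hDHM
      rwa [Real.log_mul (by norm_num) (by positivity), Real.log_rpow (by exact_mod_cast hR0)]
        at h1
  have hkd : (k : ℝ) * Real.log d ≤ (k : ℝ) * Real.log 48 + Real.log R := by
    have := mul_le_mul_of_nonneg_left hld (le_of_lt hk0)
    have hkne : (k : ℝ) ≠ 0 := ne_of_gt hk0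
    field_simp at this
    linarith
  rw [Real.log_mul (by positivity) (by exact_mod_cast hP0.ne'), Real.log_pow]
  rw [div_lt_div_iff₀ hlt (by positivity)]
  nlinarith [mul_lt_mul_of_pos_right hl48 hk0, mul_le_mul_of_nonneg_right hkd (le_of_lt hlt),
    mul_le_mul_of_nonneg_right hlR (le_of_lt hlt)]
end

section
/- For m ≥ 7, the number of conjugacy classes of S_m contained in A_m (equivalently, the number of cycle types of even permutations of {1,…,m}) is strictly greater than m. That is, ω_{A_m}(S_m) > m for all m ≥ 7. -/
open Equiv Multiset

/-- A family of cycle types of even permutations: the empty type, `{3,3}`,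
`{2,2,3}`, and for each `k ≥ 3` a type with support of size exactly `k`. -/
def evenCT (k : ℕ) : Multiset ℕ :=
  if k = 0 then 0 else if k = 1 then {3, 3} else if k = 2 then {2, 2, 3}
  else if k % 2 = 1 then {k} else {2, k - 2}

lemma evenCT_sum (k : ℕ) :
    (evenCT k).sum = if k = 0 then 0 else if k = 1 then 6 else if k = 2 then 7 else k := by
  unfold evenCT
  split_ifs with h0 h1 h2 h3 <;> simp <;> omega

lemma evenCT_two_le (k : ℕ) : ∀ a ∈ evenCT k, 2 ≤ a := by
  unfold evenCT
  split_ifs with h0 h1 h2 h3 <;> intro a ha <;> simp at ha <;> omega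

lemma evenCT_even (k : ℕ) : Even ((evenCT k).sum + (evenCT k).card) := by
  unfold evenCT
  split_ifs with h0 h1 h2 h3 <;> simp [Nat.even_iff] <;> omega

lemma evenCT_inj {k k' : ℕ} (h : evenCT k = evenCT k') : k = k' := by
  have hs := congrArg Multiset.sum h
  rw [evenCT_sum, evenCT_sum] at hs
  by_contra hne
  have : (k = 1 ∧ k' = 6) ∨ (k = 6 ∧ k' = 1) ∨ (k = 2 ∧ k' = 7) ∨ (k = 7 ∧ k' = 2) := by
    split_ifs at hs <;> omega
  rcases this with ⟨rfl, rfl⟩ | ⟨rfl, rfl⟩ | ⟨rfl, rfl⟩ | ⟨rfl, rfl⟩ <;>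
    simp [evenCT] at h <;> revert h <;> decide

/-- For `m ≥ 7`, the number of conjugacy classes of `S_m` contained in `A_m`
(the number of cycle types of even permutations of `{1,…,m}`) is strictly
greater than `m`. -/
theorem stmt17 (m : ℕ) (hm : 7 ≤ m) :
    m < Nat.card {C : ConjClasses (Equiv.Perm (Fin m)) //
        ∀ g ∈ C.carrier, g ∈ alternatingGroup (Fin m)} := by
  have hex : ∀ k : Fin (m + 1), ∃ g : Equiv.Perm (Fin m), g.cycleType = evenCT k := by
    intro k
    rw [Equiv.Perm.exists_with_cycleType_iff]
    refine ⟨?_, evenCT_two_le k⟩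
    rw [evenCT_sum]
    have := k.isLt
    simp only [Fintype.card_fin]
    split_ifs <;> omega
  choose g hg using hex
  set F : Fin (m + 1) → {C : ConjClasses (Equiv.Perm (Fin m)) //
      ∀ g ∈ C.carrier, g ∈ alternatingGroup (Fin m)} :=
    fun k => ⟨ConjClasses.mk (g k), by
      intro h hmem
      rw [ConjClasses.mem_carrier_iff_mk_eq, ConjClasses.mk_eq_mk_iff_isConj] at hmem
      have hct : h.cycleType = evenCT k := by
        rw [← Equiv.Perm.isConj_iff_cycleType_eq.mp hmem.symm, hg]
      rw [Equiv.Perm.mem_alternatingGroup, Equiv.Perm.sign_of_cycleType, hct]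
      exact (evenCT_even k).neg_one_pow⟩ with hF
  have hFinj : Function.Injective F := by
    intro i j hij
    have : ConjClasses.mk (g i) = ConjClasses.mk (g j) := congrArg Subtype.val hij
    rw [ConjClasses.mk_eq_mk_iff_isConj, Equiv.Perm.isConj_iff_cycleType_eq, hg, hg] at this
    exact Fin.ext (evenCT_inj this)
  have := Nat.card_le_card_of_injective F hFinj
  simp only [Nat.card_eq_fintype_card, Fintype.card_fin] at this
  omega
end

section
/- Let H be a finite transitive permutation group on a finite set Δ containing a regular subgroup A with |A| ≥ 48, let r ≥ 2, let K ≤ S_r be transitive, and let G satisfy A^r ≤ G ≤ H ≀ K (product action on Ω = Δ^r) with the projection of G to S_r having image K. If b_Δ(H) = 2 then b_Ω(G) ≤ ⌈ log d(K) / log |A| ⌉ + 2 and b_Ω(G) ≥ ⌈ log |G| / log |Ω| ⌉, and moreover log d(K)/log|A| ≤ log|G|/log|Ω| (using d(K) ≤ 48·|K|^{1/r} and |A|^r·|K| ≤ |G|). Consequently b_Ω(G) equals ⌈log|G|/log|Ω|⌉ + ε for some ε ∈ {0,1,2}. -/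
/-- Let `H` be a finite transitive permutation group on `Δ` with a regular subgroup
`A` of order at least `48`, let `K ≤ S_r` (`r ≥ 2`) be transitive, and let `G` with
`A^r ≤ G ≤ H ≀ K` act on `Ω = Δ^r` via the product action, the projection of `G`
to `S_r` having image `K`. Assume `b_Δ(H) = 2`, the DHM bound `d(K) ≤ 48·|K|^{1/r}`
and `|A|^r·|K| ≤ |G|`. Then `b_Ω(G) ≤ ⌈log d(K)/log|A|⌉ + 2`,
`b_Ω(G) ≥ ⌈log|G|/log|Ω|⌉`, `log d(K)/log|A| ≤ log|G|/log|Ω|`, and consequently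
`b_Ω(G) = ⌈log|G|/log|Ω|⌉ + ε` for some `ε ∈ {0,1,2}`. -/
theorem stmt18 {Δ : Type*} [Fintype Δ]
    (H A : Subgroup (Equiv.Perm Δ)) (hAH : A ≤ H)
    (hHtrans : ∀ δ₁ δ₂ : Δ, ∃ h ∈ H, h δ₁ = δ₂)
    (hAtrans : ∀ δ₁ δ₂ : Δ, ∃ a ∈ A, a δ₁ = δ₂)
    (hAfree : ∀ a ∈ A, (∃ δ : Δ, a δ = δ) → a = 1)
    (hA48 : 48 ≤ Nat.card A)
    {r : ℕ} (hr : 2 ≤ r) (K : Subgroup (Equiv.Perm (Fin r)))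
    (hKtrans : ∀ i j : Fin r, ∃ π ∈ K, π i = j)
    (G : Subgroup (Equiv.Perm (Fin r → Δ)))
    (hG : ∀ g ∈ G, ∃ π ∈ K, ∃ h : Fin r → Equiv.Perm Δ,
        (∀ i, h i ∈ H) ∧ ∀ (f : Fin r → Δ) (i : Fin r), g f (π i) = h i (f i))
    (hGA : ∀ h : Fin r → Equiv.Perm Δ, (∀ i, h i ∈ A) →
        Equiv.piCongrRight h ∈ G)
    (hproj : ∀ π ∈ K, ∃ g ∈ G, ∃ h : Fin r → Equiv.Perm Δ,
        (∀ i, h i ∈ H) ∧ ∀ (f : Fin r → Δ) (i : Fin r), g f (π i) = h i (f i))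
    (hbH : sInf {n | ∃ S : Finset Δ, S.card = n ∧
        ∀ h ∈ H, (∀ δ ∈ S, h δ = δ) → h = 1} = 2)
    (d : ℕ)
    (hd : d = sInf {d' | ∃ c : Fin r → Fin d',
        ∀ π ∈ K, (∀ i, c (π i) = c i) → π = 1})
    (hDHM : (d : ℝ) ≤ 48 * (Nat.card K : ℝ) ^ ((1 : ℝ) / r))
    (hGcard : Nat.card A ^ r * Nat.card K ≤ Nat.card G)
    (bΩ : ℕ)
    (hbΩ : bΩ = sInf {n | ∃ S : Finset (Fin r → Δ), S.card = n ∧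
        ∀ g ∈ G, (∀ f ∈ S, g f = f) → g = 1}) :
    bΩ ≤ ⌈Real.log d / Real.log (Nat.card A)⌉₊ + 2 ∧
    ⌈Real.log (Nat.card G) / Real.log (Fintype.card (Fin r → Δ))⌉₊ ≤ bΩ ∧
    Real.log d / Real.log (Nat.card A)
      ≤ Real.log (Nat.card G) / Real.log (Fintype.card (Fin r → Δ)) ∧
    ∃ ε ≤ 2, bΩ =
      ⌈Real.log (Nat.card G) / Real.log (Fintype.card (Fin r → Δ))⌉₊ + ε := by
  classical
  have hr0 : 0 < r := lt_of_lt_of_le (by norm_num) hr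
  have hDne : {d' | ∃ c : Fin r → Fin d',
      ∀ π ∈ K, (∀ i, c (π i) = c i) → π = 1}.Nonempty := by
    refine ⟨r, fun i => i, ?_⟩
    intro π hπ hfix
    exact Equiv.ext fun i => by simpa using hfix i
  obtain ⟨c, hc⟩ : ∃ c : Fin r → Fin d,
      ∀ π ∈ K, (∀ i, c (π i) = c i) → π = 1 := by
    have h1 := Nat.sInf_mem hDne
    rw [← hd] at h1
    exact h1
  clear hd
  have hd1 : 1 ≤ d := (c ⟨0, hr0⟩).pos
  -- Δ is nonempty
  have hΔne : Nonempty Δ := by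
    by_contra hne
    rw [not_nonempty_iff] at hne
    have h1 : Nat.card A ≤ Nat.card (Equiv.Perm Δ) :=
      Nat.card_le_card_of_injective _ Subtype.val_injective
    have h2 : Nat.card (Equiv.Perm Δ) = 1 := Nat.card_unique
    rw [h2] at h1
    exact absurd (hA48.trans h1) (by norm_num)
  obtain ⟨δ₀⟩ := hΔne
  set a := Nat.card A with ha
  -- |Δ| = |A|
  have hbij : Function.Bijective (fun x : A => (x : Equiv.Perm Δ) δ₀) := by
    constructor
    · intro x y hxy
      simp only at hxy
      have hmem : (y : Equiv.Perm Δ)⁻¹ * (x : Equiv.Perm Δ) ∈ A :=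
        mul_mem (inv_mem y.2) x.2
      have hfix : ((y : Equiv.Perm Δ)⁻¹ * (x : Equiv.Perm Δ)) δ₀ = δ₀ := by
        simp [Equiv.Perm.mul_apply, hxy]
      have h1 := hAfree _ hmem ⟨δ₀, hfix⟩
      exact Subtype.ext (inv_mul_eq_one.mp h1).symm
    · intro δ
      obtain ⟨a', ha', he⟩ := hAtrans δ₀ δ
      exact ⟨⟨a', ha'⟩, he⟩
  have hcardΔ : Fintype.card Δ = a := by
    rw [← Nat.card_eq_fintype_card, ha]
    exact (Nat.card_eq_of_bijective _ hbij).symm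
  have ha48 : 48 ≤ a := hA48
  have ha1 : (1:ℝ) < (a:ℝ) := by exact_mod_cast lt_of_lt_of_le (by norm_num) ha48
  have hla : 0 < Real.log a := Real.log_pos ha1
  have hΩ : Fintype.card (Fin r → Δ) = a ^ r := by
    simp [Fintype.card_fun, hcardΔ]
  have hΩ1 : (1:ℝ) < (Fintype.card (Fin r → Δ) : ℝ) := by
    rw [hΩ]
    exact_mod_cast Nat.one_lt_pow (by omega) (by omega)
  have hlΩ : 0 < Real.log (Fintype.card (Fin r → Δ)) := Real.log_pos hΩ1
  have hlΩeq : Real.log (Fintype.card (Fin r → Δ)) = (r:ℝ) * Real.log a := by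
    rw [hΩ]; push_cast [Real.log_pow]; ring
  set t := ⌈Real.log d / Real.log a⌉₊ with htdef
  have hdat : (d:ℝ) ≤ (a:ℝ) ^ t := by
    have h1 : Real.log d / Real.log a ≤ (t:ℝ) := Nat.le_ceil _
    rw [div_le_iff₀ hla] at h1
    have h3 : Real.log d ≤ Real.log ((a:ℝ)^t) := by
      rw [Real.log_pow]; exact h1
    have hd0 : (0:ℝ) < d := by exact_mod_cast hd1
    have hat0 : (0:ℝ) < (a:ℝ)^t := by positivity
    exact (Real.log_le_log_iff hd0 hat0).mp h3
  have hdatn : d ≤ a ^ t := by exact_mod_cast hdat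
  have hcard_le : Fintype.card (Fin d) ≤ Fintype.card (Fin t → Δ) := by
    simpa [Fintype.card_fun, hcardΔ] using hdatn
  obtain ⟨ι⟩ : Nonempty (Fin d ↪ (Fin t → Δ)) :=
    Function.Embedding.nonempty_of_card_le hcard_le
  -- base of size 2 for H
  have hHne : {n | ∃ S : Finset Δ, S.card = n ∧
      ∀ h ∈ H, (∀ δ ∈ S, h δ = δ) → h = 1}.Nonempty := by
    by_contra hcon
    rw [Set.not_nonempty_iff_eq_empty] at hcon
    rw [hcon, Nat.sInf_empty] at hbH
    exact absurd hbH (by norm_num)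
  have h2mem := Nat.sInf_mem hHne
  rw [hbH] at h2mem
  obtain ⟨S2, hS2card, hS2base⟩ := h2mem
  obtain ⟨α, β, hαβ, rfl⟩ := Finset.card_eq_two.mp hS2card
  -- the base for G
  set Sb : Finset (Fin r → Δ) :=
    insert (fun _ => α) (insert (fun _ => β)
      (Finset.image (fun s : Fin t => fun i : Fin r => ι (c i) s) Finset.univ)) with hSb
  have hSbbase : ∀ g ∈ G, (∀ f ∈ Sb, g f = f) → g = 1 := by
    intro g hg hfix
    obtain ⟨π, hπK, h, hhH, hgh⟩ := hG g hg
    have hfα : g (fun _ => α) = (fun _ => α) := hfix _ (Finset.mem_insert_self _ _)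
    have hfβ : g (fun _ => β) = (fun _ => β) :=
      hfix _ (Finset.mem_insert_of_mem (Finset.mem_insert_self _ _))
    have hh1 : ∀ i, h i = 1 := by
      intro i
      apply hS2base (h i) (hhH i)
      intro δ hδ
      rcases Finset.mem_insert.mp hδ with hδ | hδ
      · rw [hδ]
        exact (hgh (fun _ => α) i).symm.trans (congrFun hfα (π i))
      · rw [Finset.mem_singleton] at hδ
        rw [hδ]
        exact (hgh (fun _ => β) i).symm.trans (congrFun hfβ (π i))
    have hπ1 : π = 1 := by
      apply hc π hπK
      intro i
      apply ι.injective
      funext s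
      have hmem : (fun j : Fin r => ι (c j) s) ∈ Sb :=
        Finset.mem_insert_of_mem (Finset.mem_insert_of_mem
          (Finset.mem_image.mpr ⟨s, Finset.mem_univ _, rfl⟩))
      have hfs := hfix _ hmem
      have h1 := hgh (fun j => ι (c j) s) i
      rw [hfs, hh1 i] at h1
      simpa using h1
    apply Equiv.ext
    intro f
    funext i
    have h1 := hgh f i
    rw [hπ1, hh1 i] at h1
    simpa using h1
  have hSbcard : Sb.card ≤ t + 2 := by
    rw [hSb]
    refine le_trans (Finset.card_insert_le _ _) ?_
    have h2 : (insert (fun _ : Fin r => β)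
        (Finset.image (fun s : Fin t => fun i : Fin r => ι (c i) s)
          Finset.univ)).card ≤ t + 1 := by
      refine le_trans (Finset.card_insert_le _ _) ?_
      have h3 : (Finset.image (fun s : Fin t => fun i : Fin r => ι (c i) s)
          Finset.univ).card ≤ t := by
        refine le_trans Finset.card_image_le ?_
        simp
      omega
    omega
  have hpart1 : bΩ ≤ t + 2 := by
    rw [hbΩ]
    exact le_trans (Nat.sInf_le ⟨Sb, rfl, hSbbase⟩) hSbcard
  -- lower bound
  have hΩmem : bΩ ∈ {n | ∃ S : Finset (Fin r → Δ), S.card = n ∧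
      ∀ g ∈ G, (∀ f ∈ S, g f = f) → g = 1} := by
    rw [hbΩ]
    apply Nat.sInf_mem
    refine ⟨Finset.univ.card, Finset.univ, rfl, ?_⟩
    intro g hg hfg
    exact Equiv.ext fun f => by simpa using hfg f (Finset.mem_univ f)
  obtain ⟨SΩ, hSΩcard, hSΩbase⟩ := hΩmem
  have hGle : Nat.card G ≤ Fintype.card (Fin r → Δ) ^ bΩ := by
    have hinj : Function.Injective
        (fun g : G => (fun x : SΩ => (g : Equiv.Perm (Fin r → Δ)) x.1)) := by
      intro g₁ g₂ hgg
      have hmem : (g₂ : Equiv.Perm (Fin r → Δ))⁻¹ * (g₁ : Equiv.Perm (Fin r → Δ)) ∈ G :=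
        mul_mem (inv_mem g₂.2) g₁.2
      have h1 : (g₂ : Equiv.Perm (Fin r → Δ))⁻¹ * (g₁ : Equiv.Perm (Fin r → Δ)) = 1 := by
        apply hSΩbase _ hmem
        intro f hf
        have h2 := congrFun hgg ⟨f, hf⟩
        simp only at h2
        simp [Equiv.Perm.mul_apply, h2]
      exact Subtype.ext (inv_mul_eq_one.mp h1).symm
    calc Nat.card G ≤ Nat.card (SΩ → (Fin r → Δ)) :=
          Nat.card_le_card_of_injective _ hinj
      _ = Fintype.card (Fin r → Δ) ^ bΩ := by
          rw [Nat.card_eq_fintype_card, Fintype.card_fun, Fintype.card_coe, hSΩcard]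
  have hG1 : 0 < Nat.card G := Nat.card_pos
  have hpart2 : ⌈Real.log (Nat.card G) / Real.log (Fintype.card (Fin r → Δ))⌉₊ ≤ bΩ := by
    rw [Nat.ceil_le, div_le_iff₀ hlΩ]
    have h1 : Real.log (Nat.card G) ≤
        Real.log ((Fintype.card (Fin r → Δ) : ℝ) ^ bΩ) := by
      have hle : (Nat.card G : ℝ) ≤ (Fintype.card (Fin r → Δ) : ℝ) ^ bΩ := by
        exact_mod_cast hGle
      exact Real.log_le_log (by exact_mod_cast hG1) hle
    rw [Real.log_pow] at h1
    exact h1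
  -- the middle inequality
  have hK0 : 0 < Nat.card K := Nat.card_pos
  have hK1 : (1:ℝ) ≤ (Nat.card K : ℝ) := by exact_mod_cast hK0
  have hlk : 0 ≤ Real.log (Nat.card K) := Real.log_nonneg hK1
  have hrpos : (0:ℝ) < (r:ℝ) := by exact_mod_cast hr0
  have hld' : (r:ℝ) * Real.log d ≤ (r:ℝ) * Real.log a + Real.log (Nat.card K) := by
    have hd0 : (0:ℝ) < d := by exact_mod_cast hd1
    have h1 : Real.log d ≤ Real.log (48 * (Nat.card K:ℝ) ^ ((1:ℝ)/r)) :=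
      Real.log_le_log hd0 hDHM
    rw [Real.log_mul (by norm_num) (by positivity),
      Real.log_rpow (by exact_mod_cast hK0)] at h1
    have h48 : Real.log 48 ≤ Real.log a := by
      apply Real.log_le_log (by norm_num)
      exact_mod_cast ha48
    have h3 : (r:ℝ) * Real.log d ≤
        (r:ℝ) * (Real.log 48 + (1:ℝ)/(r:ℝ) * Real.log (Nat.card K)) :=
      mul_le_mul_of_nonneg_left h1 hrpos.le
    have h2 : (r:ℝ) * ((1:ℝ)/(r:ℝ) * Real.log (Nat.card K)) = Real.log (Nat.card K) := by
      field_simp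
    rw [mul_add, h2] at h3
    have h4 : (r:ℝ) * Real.log 48 ≤ (r:ℝ) * Real.log a :=
      mul_le_mul_of_nonneg_left h48 hrpos.le
    linarith
  have hlG : (r : ℝ) * Real.log a + Real.log (Nat.card K) ≤ Real.log (Nat.card G) := by
    have h1 : Real.log ((a:ℝ)^r * (Nat.card K : ℝ)) ≤ Real.log (Nat.card G) := by
      apply Real.log_le_log (by positivity)
      push_cast
      exact_mod_cast hGcard
    rw [Real.log_mul (by positivity) (by positivity), Real.log_pow] at h1
    exact h1
  have hpart3 : Real.log d / Real.log a ≤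
      Real.log (Nat.card G) / Real.log (Fintype.card (Fin r → Δ)) := by
    rw [hlΩeq, div_le_div_iff₀ hla (by positivity)]
    have h1 : (r:ℝ) * Real.log d * Real.log a ≤
        ((r:ℝ) * Real.log a + Real.log (Nat.card K)) * Real.log a :=
      mul_le_mul_of_nonneg_right hld' hla.le
    have h2 : ((r:ℝ) * Real.log a + Real.log (Nat.card K)) * Real.log a ≤
        Real.log (Nat.card G) * Real.log a :=
      mul_le_mul_of_nonneg_right hlG hla.le
    calc Real.log d * ((r:ℝ) * Real.log a)
        = (r:ℝ) * Real.log d * Real.log a := by ring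
      _ ≤ Real.log (Nat.card G) * Real.log a := h1.trans h2
  -- conclusion
  have hceil : t ≤ ⌈Real.log (Nat.card G) / Real.log (Fintype.card (Fin r → Δ))⌉₊ :=
    Nat.ceil_le_ceil hpart3
  exact ⟨hpart1, hpart2, hpart3,
    bΩ - ⌈Real.log (Nat.card G) / Real.log (Fintype.card (Fin r → Δ))⌉₊,
    by omega, by omega⟩
end
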